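/- Let a : [0,∞) → ℝ be bounded and continuous. Then λ ∈ ℝ satisfies: there exist C ≥ 0, α > 0 with ∫_s^t [a(r)−λ] dr ≤ C − α(t−s) for all 0 ≤ s ≤ t, if and only if λ > β⁺(a), where β⁺(a) = limsup_{L,s→+∞} (1/L)∫_s^{s+L} a(r) dr. -/
import Mathlib


/-- Identity-projector dichotomy of the shifted equation `x' = [a(t) - λ]x` on `[0,∞)` is
equivalent to `λ > β⁺(a)`, the upper Bohl exponent. -/
theorem stmt_8 (a : ℝ → ℝ) (ha : Continuous a) (hab : ∃ M, ∀ t, |a t| ≤ M) (lam : ℝ) :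
    (∃ C ≥ (0:ℝ), ∃ α > (0:ℝ), ∀ s t : ℝ, 0 ≤ s → s ≤ t →
      (∫ r in s..t, a r - lam) ≤ C - α * (t - s)) ↔
    Filter.limsup (fun p : ℝ × ℝ => (1 / p.1) * ∫ r in p.2..(p.2 + p.1), a r)
      (Filter.atTop ×ˢ Filter.atTop) < lam := by
  obtain ⟨M, hM⟩ := hab
  have hM0 : 0 ≤ M := le_trans (abs_nonneg _) (hM 0)
  set u : ℝ × ℝ → ℝ := fun p => (1 / p.1) * ∫ r in p.2..(p.2 + p.1), a r with hu
  have key : ∀ s t : ℝ, (∫ r in s..t, a r - lam) = (∫ r in s..t, a r) - lam * (t - s) := by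
    intro s t
    rw [intervalIntegral.integral_sub (ha.intervalIntegrable s t) intervalIntegrable_const,
      intervalIntegral.integral_const, smul_eq_mul]
    ring
  have habs : ∀ s t : ℝ, |∫ r in s..t, a r| ≤ M * |t - s| := by
    intro s t
    rw [← Real.norm_eq_abs]
    exact intervalIntegral.norm_integral_le_of_norm_le_const
      (fun x _ => by rw [Real.norm_eq_abs]; exact hM x)
  -- boundedness of u on the product filter
  have hubd : ∀ p : ℝ × ℝ, 1 ≤ p.1 → |u p| ≤ M := by
    rintro ⟨L, s⟩ hL
    have hL0 : (0:ℝ) < L := lt_of_lt_of_le one_pos hL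
    have h1 := habs s (s + L)
    have h2 : |s + L - s| = L := by rw [add_sub_cancel_left, abs_of_pos hL0]
    rw [h2] at h1
    have : |u (L, s)| = (1/L) * |∫ r in s..(s+L), a r| := by
      rw [hu]; simp only [abs_mul, abs_of_pos (one_div_pos.mpr hL0)]
    rw [this]
    calc (1/L) * |∫ r in s..(s+L), a r| ≤ (1/L) * (M * L) := by
          apply mul_le_mul_of_nonneg_left h1 (le_of_lt (one_div_pos.mpr hL0))
      _ = M := by field_simp
    -- done
  have hevbd : ∀ᶠ p : ℝ × ℝ in Filter.atTop ×ˢ Filter.atTop, 1 ≤ p.1 := by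
    rw [Filter.prod_atTop_atTop_eq, Filter.eventually_atTop]
    exact ⟨(1, 0), fun p hp => hp.1⟩
  have hbddle : Filter.IsBoundedUnder (· ≤ ·) (Filter.atTop ×ˢ Filter.atTop) u :=
    ⟨M, Filter.eventually_map.mpr (by
      filter_upwards [hevbd] with p hp using (abs_le.mp (hubd p hp)).2)⟩
  have hbddge : Filter.IsBoundedUnder (· ≥ ·) (Filter.atTop ×ˢ Filter.atTop) u :=
    ⟨-M, Filter.eventually_map.mpr (by
      filter_upwards [hevbd] with p hp using (abs_le.mp (hubd p hp)).1)⟩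
  constructor
  · rintro ⟨C, hC, α, hα, h⟩
    have hL1 : (0:ℝ) < max 1 (2 * C / α) := lt_max_of_lt_left one_pos
    have hev : ∀ᶠ p : ℝ × ℝ in Filter.atTop ×ˢ Filter.atTop, u p ≤ lam - α / 2 := by
      rw [Filter.prod_atTop_atTop_eq, Filter.eventually_atTop]
      refine ⟨(max 1 (2 * C / α), 0), ?_⟩
      rintro ⟨L, s⟩ ⟨hL, hs⟩
      simp only at hL hs
      have hL0 : (0:ℝ) < L := lt_of_lt_of_le hL1 hL
      have h1 := h s (s + L) hs (by linarith)
      rw [key] at h1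
      have h2 : (∫ r in s..(s+L), a r) ≤ C + (lam - α) * L := by
        have : s + L - s = L := by ring
        rw [this] at h1; linarith [h1]
      have hCL : C / L ≤ α / 2 := by
        rw [div_le_iff₀ hL0]
        have h3 : 2 * C / α ≤ L := le_trans (le_max_right _ _) hL
        rw [div_le_iff₀ hα] at h3
        nlinarith
      have : u (L, s) = (1/L) * ∫ r in s..(s+L), a r := rfl
      rw [this]
      calc (1/L) * ∫ r in s..(s+L), a r ≤ (1/L) * (C + (lam - α) * L) :=
            mul_le_mul_of_nonneg_left h2 (le_of_lt (one_div_pos.mpr hL0))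
        _ = C / L + (lam - α) := by field_simp
        _ ≤ α / 2 + (lam - α) := by linarith
        _ = lam - α / 2 := by ring
    have := Filter.limsup_le_of_le (hbddge.isCoboundedUnder_le) hev
    linarith
  · intro h
    set β := Filter.limsup u (Filter.atTop ×ˢ Filter.atTop) with hβ
    set α := (lam - β) / 2 with hαdef
    have hα : 0 < α := by simp only [hαdef]; linarith
    have hev : ∀ᶠ p : ℝ × ℝ in Filter.atTop ×ˢ Filter.atTop, u p < lam - α := by
      apply Filter.eventually_lt_of_limsup_lt _ hbddle
      simp only [hαdef]; rw [← hβ]; linarith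
    rw [Filter.prod_atTop_atTop_eq, Filter.eventually_atTop] at hev
    obtain ⟨⟨L₁, s₁⟩, hp⟩ := hev
    set L₀ := max L₁ 1 with hL₀def
    set s₀ := max s₁ 0 with hs₀def
    have hL₀1 : (1:ℝ) ≤ L₀ := le_max_right _ _
    have hL₀0 : (0:ℝ) < L₀ := lt_of_lt_of_le one_pos hL₀1
    have hs₀0 : (0:ℝ) ≤ s₀ := le_max_right _ _
    -- key estimate for long intervals starting past s₀
    have hlong : ∀ s L : ℝ, s₀ ≤ s → L₀ ≤ L → (∫ r in s..(s+L), a r) ≤ (lam - α) * L := by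
      intro s L hs hL
      have h1 : u (L, s) < lam - α := hp (L, s)
        ⟨le_trans (le_max_left _ _) hL, le_trans (le_max_left _ _) hs⟩
      have hL0 : (0:ℝ) < L := lt_of_lt_of_le hL₀0 hL
      have : u (L, s) = (1/L) * ∫ r in s..(s+L), a r := rfl
      rw [this, one_div, inv_mul_eq_div, div_lt_iff₀ hL0] at h1
      linarith
    refine ⟨(M + |lam| + α) * (s₀ + L₀) + (M + |lam| + α) * s₀, by positivity, α, hα, ?_⟩
    intro s t hs hst
    set C := (M + |lam| + α) * (s₀ + L₀) + (M + |lam| + α) * s₀ with hCdef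
    rw [key]
    set s' := max s s₀ with hs'def
    have hss' : s ≤ s' := le_max_left _ _
    have hs's : s' - s ≤ s₀ := by
      rcases le_total s s₀ with h1 | h1
      · rw [hs'def, max_eq_right h1]; linarith
      · rw [hs'def, max_eq_left h1]; linarith
    by_cases hcase : s' + L₀ ≤ t
    · -- long case
      have hs't : s' ≤ t := by linarith
      have hsplit : (∫ r in s..t, a r) = (∫ r in s..s', a r) + ∫ r in s'..t, a r :=
        (intervalIntegral.integral_add_adjacent_intervals (ha.intervalIntegrable s s')
          (ha.intervalIntegrable s' t)).symm
      have h1 : (∫ r in s..s', a r) ≤ M * (s' - s) := by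
        have := (abs_le.mp (habs s s')).2
        rwa [abs_of_nonneg (by linarith : (0:ℝ) ≤ s' - s)] at this
      have h2 : (∫ r in s'..t, a r) ≤ (lam - α) * (t - s') := by
        have := hlong s' (t - s') (le_max_right _ _) (by linarith)
        rwa [add_sub_cancel] at this
      have hlam : lam ≤ |lam| := le_abs_self lam
      have hlam' : -|lam| ≤ lam := neg_abs_le lam
      rw [hsplit]
      have hts' : t - s' ≥ 0 := by linarith
      nlinarith [mul_nonneg (by linarith : (0:ℝ) ≤ M + |lam| + α) hs₀0,
        mul_nonneg hα.le hL₀0.le]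
    · -- short case: t - s ≤ s₀ + L₀
      push_neg at hcase
      have hshort : t - s ≤ s₀ + L₀ := by
        have : t - s' < L₀ ∨ t ≤ s' := by
          rcases le_total s' t with h1 | h1
          · left; linarith
          · right; exact h1
        rcases this with h1 | h1
        · linarith
        · linarith
      have h1 : (∫ r in s..t, a r) ≤ M * (t - s) := by
        have := (abs_le.mp (habs s t)).2
        rwa [abs_of_nonneg (by linarith : (0:ℝ) ≤ t - s)] at this
      have hlam' : -|lam| ≤ lam := neg_abs_le lam
      have hts : 0 ≤ t - s := by linarith
      nlinarith [mul_le_mul_of_nonneg_left hshort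
          (show (0:ℝ) ≤ M + |lam| + α by linarith [abs_nonneg lam]),
        mul_le_mul_of_nonneg_right (neg_abs_le lam) hts,
        mul_nonneg (show (0:ℝ) ≤ M + |lam| + α by linarith [abs_nonneg lam]) hs₀0]
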